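/- arXiv:0807.2108 — 8 statements merged into one kernel-verified Lean document; each statement's English description precedes it below -/
import Mathlib

section
/- Let (s_n)_{n∈ℕ} be a sequence of real numbers and let 1/2 < γ ≤ 1. Define the weighted sequence s_{n+γ} := (1−γ)·s_n + γ·s_{n+1} for n ∈ ℕ. If the sequence (s_{n+γ})_{n∈ℕ} is bounded, then the original sequence (s_n)_{n∈ℕ} is bounded. -/
/-- If `1/2 < γ ≤ 1` and the weighted sequence `n ↦ (1-γ)·s n + γ·s (n+1)` is bounded,
then the original sequence `s` is bounded. -/
theorem weighted_bounded_implies_bounded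
    (s : ℕ → ℝ) (γ : ℝ) (hγ₁ : 1/2 < γ) (hγ₂ : γ ≤ 1)
    (hbdd : ∃ C > 0, ∀ n : ℕ, |(1 - γ) * s n + γ * s (n + 1)| ≤ C) :
    ∃ C > 0, ∀ n : ℕ, |s n| ≤ C := by
  obtain ⟨C, hC, h⟩ := hbdd
  have h2γ : (0:ℝ) < 2*γ - 1 := by linarith
  refine ⟨|s 0| + C/(2*γ-1), by positivity, ?_⟩
  intro n
  induction n with
  | zero => have : 0 < C/(2*γ-1) := by positivity
            linarith
  | succ n ih =>
    have hn := h n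
    have h1 : |γ * s (n+1)| ≤ C + (1-γ) * |s n| := by
      have : γ * s (n+1) = ((1-γ) * s n + γ * s (n+1)) + (-(1-γ)) * s n := by ring
      rw [this]
      calc |((1-γ) * s n + γ * s (n+1)) + (-(1-γ)) * s n|
          ≤ |(1-γ) * s n + γ * s (n+1)| + |(-(1-γ)) * s n| := abs_add_le _ _
        _ ≤ C + (1-γ) * |s n| := by
            rw [abs_mul, abs_neg, abs_of_nonneg (by linarith : (0:ℝ) ≤ 1-γ)]
            linarith
    have h2 : |γ * s (n+1)| = γ * |s (n+1)| := by
      rw [abs_mul, abs_of_pos (by linarith : (0:ℝ) < γ)]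
    rw [h2] at h1
    have habs : (0:ℝ) ≤ |s n| := abs_nonneg _
    have hkey : C ≤ (2*γ-1) * (|s 0| + C/(2*γ-1)) := by
      have : (2*γ-1) * (C/(2*γ-1)) = C := by field_simp
      nlinarith [abs_nonneg (s 0)]
    nlinarith [abs_nonneg (s (n+1))]
end

section
/- Let M be a real symmetric positive definite n × n matrix, K a real symmetric positive semidefinite n × n matrix, and ω ≥ 0 a real number such that xᵀ·K·x ≤ ω·xᵀ·M·x for all x ∈ ℝⁿ. Let Δt > 0 and γ ∈ [0,1] satisfy Δt·(1 − 2γ)·ω < 2. Then the matrix A := M + (γ − 1/2)·Δt·K is symmetric positive definite. In particular, for 1/2 ≤ γ ≤ 1 the matrix A is positive definite for every Δt > 0. -/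
open Matrix

lemma aux_posDef {n : ℕ} (M K : Matrix (Fin n) (Fin n) ℝ)
    (hM : M.PosDef) (hK : K.PosSemidef)
    (ω : ℝ) (hω : 0 ≤ ω)
    (hgen : ∀ x : Fin n → ℝ, x ⬝ᵥ K.mulVec x ≤ ω * (x ⬝ᵥ M.mulVec x))
    (c : ℝ) (hc : -(c * ω) < 1) : (M + c • K).PosDef := by
  have hKherm : (c • K).IsHermitian := by
    rw [Matrix.IsHermitian, Matrix.conjTranspose_smul, hK.isHermitian.eq]; norm_num
  refine Matrix.PosDef.of_dotProduct_mulVec_pos (hM.isHermitian.add hKherm) fun x hx => ?_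
  · have hMx : 0 < x ⬝ᵥ M.mulVec x := by simpa using hM.dotProduct_mulVec_pos hx
    have hKx : 0 ≤ x ⬝ᵥ K.mulVec x := by simpa using hK.dotProduct_mulVec_nonneg x
    have hgx := hgen x
    have : (x ⬝ᵥ (M + c • K).mulVec x) = x ⬝ᵥ M.mulVec x + c * (x ⬝ᵥ K.mulVec x) := by
      rw [add_mulVec, dotProduct_add, smul_mulVec, dotProduct_smul, smul_eq_mul]
    simp only [star_trivial]
    rw [this]
    rcases le_or_gt 0 c with h | h
    · positivity
    · nlinarith

/-- If `M` is symmetric positive definite, `K` symmetric positive semidefinite,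
`ω ≥ 0` bounds the generalized eigenvalues (`xᵀKx ≤ ω·xᵀMx` for all `x`), `Δt > 0`,
`γ ∈ [0,1]` and `Δt·(1-2γ)·ω < 2`, then `A = M + (γ - 1/2)·Δt·K` is symmetric positive
definite.  In particular, for `1/2 ≤ γ ≤ 1` it is positive definite for every `Δt > 0`. -/
theorem A_matrix_posDef {n : ℕ} (M K : Matrix (Fin n) (Fin n) ℝ)
    (hM : M.PosDef) (hK : K.PosSemidef)
    (ω : ℝ) (hω : 0 ≤ ω)
    (hgen : ∀ x : Fin n → ℝ, x ⬝ᵥ K.mulVec x ≤ ω * (x ⬝ᵥ M.mulVec x))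
    (Δt γ : ℝ) (hΔt : 0 < Δt) (hγ₀ : 0 ≤ γ) (hγ₁ : γ ≤ 1)
    (hcond : Δt * (1 - 2 * γ) * ω < 2) :
    (M + ((γ - 1/2) * Δt) • K).PosDef ∧
      (1/2 ≤ γ → ∀ Δt' : ℝ, 0 < Δt' → (M + ((γ - 1/2) * Δt') • K).PosDef) := by
  constructor
  · exact aux_posDef M K hM hK ω hω hgen _ (by nlinarith)
  · intro hγ Δt' hΔt'
    refine aux_posDef M K hM hK ω hω hgen _ ?_
    have : 0 ≤ (γ - 1/2) * Δt' * ω := by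
      apply mul_nonneg (mul_nonneg (by linarith) hΔt'.le) hω
    linarith
end

section
/- Under the d-continuity domain decomposition method, the energy ∑_{i=1}^S d_i(n)ᵀ·A_i·d_i(n) is non-increasing in n: for all n ∈ ℕ, ∑_{i=1}^S d_i(n+1)ᵀ·A_i·d_i(n+1) ≤ ∑_{i=1}^S d_i(n)ᵀ·A_i·d_i(n). -/
open Matrix

variable {ι : Type*} [Fintype ι] {μι : Type*} [Fintype μι]

lemma symm_dot (Mm : Matrix ι ι ℝ) (h : Mmᵀ = Mm) (x y : ι → ℝ) :
    x ⬝ᵥ Mm.mulVec y = y ⬝ᵥ Mm.mulVec x := by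
  rw [dotProduct_mulVec, ← mulVec_transpose, h, dotProduct_comm]

lemma trans_dot (Cc : Matrix μι ι ℝ) (lam : μι → ℝ) (s : ι → ℝ) :
    Ccᵀ.mulVec lam ⬝ᵥ s = lam ⬝ᵥ Cc.mulVec s := by
  rw [mulVec_transpose, ← dotProduct_mulVec]

lemma key_step (Mm Kk : Matrix ι ι ℝ) (hMs : Mmᵀ = Mm) (hKs : Kkᵀ = Kk)
    (Cc : Matrix μι ι ℝ) (Δt γ : ℝ)
    (d0 d1 v0 v1 : ι → ℝ) (l0 l1 : μι → ℝ)
    (hE0 : Mm.mulVec v0 + Kk.mulVec d0 = Ccᵀ.mulVec l0)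
    (hE1 : Mm.mulVec v1 + Kk.mulVec d1 = Ccᵀ.mulVec l1)
    (hU : d1 = d0 + Δt • ((1 - γ) • v0 + γ • v1)) :
    d1 ⬝ᵥ (Mm + ((γ - 1/2) * Δt) • Kk).mulVec d1 -
      d0 ⬝ᵥ (Mm + ((γ - 1/2) * Δt) • Kk).mulVec d0 =
    Δt * (((1 - γ) • l0 + γ • l1) ⬝ᵥ Cc.mulVec (d1 + d0)) -
      (Δt / 2) * ((d1 + d0) ⬝ᵥ Kk.mulVec (d1 + d0)) := by
  set u : ι → ℝ := (1 - γ) • v0 + γ • v1 with hu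
  set s : ι → ℝ := d1 + d0 with hs
  set μ : μι → ℝ := (1 - γ) • l0 + γ • l1 with hμ
  have hA : (Mm + ((γ - 1/2) * Δt) • Kk)ᵀ = Mm + ((γ - 1/2) * Δt) • Kk := by
    rw [transpose_add, transpose_smul, hMs, hKs]
  -- Step A: LHS = (d1 - d0) ⬝ᵥ A *ᵥ s
  have stepA : d1 ⬝ᵥ (Mm + ((γ - 1/2) * Δt) • Kk).mulVec d1 -
      d0 ⬝ᵥ (Mm + ((γ - 1/2) * Δt) • Kk).mulVec d0 =
      (d1 - d0) ⬝ᵥ (Mm + ((γ - 1/2) * Δt) • Kk).mulVec s := by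
    rw [hs, mulVec_add, sub_dotProduct, dotProduct_add, dotProduct_add,
      symm_dot _ hA d0 d1]
    ring
  have hw : d1 - d0 = Δt • u := by rw [hU]; abel
  -- combined subdomain equation
  have hEu : Mm.mulVec u = Ccᵀ.mulVec μ - Kk.mulVec ((1 - γ) • d0 + γ • d1) := by
    have h0 : (1 - γ) • (Mm.mulVec v0) + (1 - γ) • (Kk.mulVec d0)
        = (1 - γ) • (Ccᵀ.mulVec l0) := by rw [← smul_add, hE0]
    have h1 : γ • (Mm.mulVec v1) + γ • (Kk.mulVec d1)
        = γ • (Ccᵀ.mulVec l1) := by rw [← smul_add, hE1]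
    rw [hu, hμ, mulVec_add, mulVec_smul, mulVec_smul, mulVec_add, mulVec_smul,
      mulVec_smul, mulVec_add, mulVec_smul, mulVec_smul, ← h0, ← h1]
    abel
  have hdγ : (1 - γ) • d0 + γ • d1 = (1/2 : ℝ) • s + (γ - 1/2) • (Δt • u) := by
    rw [← hw, hs]; module
  calc d1 ⬝ᵥ (Mm + ((γ - 1/2) * Δt) • Kk).mulVec d1 -
      d0 ⬝ᵥ (Mm + ((γ - 1/2) * Δt) • Kk).mulVec d0
      = (Δt • u) ⬝ᵥ (Mm + ((γ - 1/2) * Δt) • Kk).mulVec s := by rw [stepA, hw]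
    _ = Δt * (u ⬝ᵥ Mm.mulVec s) + (γ - 1/2) * Δt * Δt * (u ⬝ᵥ Kk.mulVec s) := by
        rw [add_mulVec, smul_mulVec, dotProduct_add, smul_dotProduct,
          smul_dotProduct, dotProduct_smul]
        simp [smul_eq_mul]; ring
    _ = Δt * (μ ⬝ᵥ Cc.mulVec s
          - ((1/2) * (s ⬝ᵥ Kk.mulVec s) + (γ - 1/2) * Δt * (u ⬝ᵥ Kk.mulVec s)))
        + (γ - 1/2) * Δt * Δt * (u ⬝ᵥ Kk.mulVec s) := by
        rw [symm_dot _ hMs u s, hEu, dotProduct_sub,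
          dotProduct_comm s (Ccᵀ *ᵥ μ), trans_dot, hdγ]
        simp only [mulVec_add, mulVec_smul, dotProduct_add, dotProduct_smul,
          smul_eq_mul]
        rw [symm_dot _ hKs s u]
        ring
    _ = Δt * (μ ⬝ᵥ Cc.mulVec s) - (Δt / 2) * (s ⬝ᵥ Kk.mulVec s) := by ring


/-- Under the d-continuity domain decomposition method (subdomain equation, trapezoidal
update, and d-continuity constraint, with zero external forcing), the energy
`∑ᵢ dᵢ(n)ᵀ·Aᵢ·dᵢ(n)` with `Aᵢ = Mᵢ + (γ - 1/2)·Δt·Kᵢ` is non-increasing in `n`. -/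
theorem dContinuity_energy_nonincreasing
    (S m : ℕ) (hS : 1 ≤ S) (nn : Fin S → ℕ)
    (M K : ∀ i : Fin S, Matrix (Fin (nn i)) (Fin (nn i)) ℝ)
    (hM : ∀ i, (M i).PosDef) (hK : ∀ i, (K i).PosSemidef)
    (C : ∀ i : Fin S, Matrix (Fin m) (Fin (nn i)) ℝ)
    (Δt γ : ℝ) (hΔt : 0 < Δt) (hγ₀ : 0 ≤ γ) (hγ₁ : γ ≤ 1)
    (d v : ∀ i : Fin S, ℕ → (Fin (nn i) → ℝ)) (lam : ℕ → (Fin m → ℝ))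
    (heq : ∀ i n, (M i).mulVec (v i n) + (K i).mulVec (d i n) = (C i)ᵀ.mulVec (lam n))
    (hupd : ∀ i n, d i (n + 1) = d i n + Δt • ((1 - γ) • v i n + γ • v i (n + 1)))
    (hcont : ∀ n, ∑ i : Fin S, (C i).mulVec (d i n) = 0) :
    ∀ n : ℕ,
      ∑ i : Fin S, d i (n + 1) ⬝ᵥ (M i + ((γ - 1/2) * Δt) • K i).mulVec (d i (n + 1)) ≤
        ∑ i : Fin S, d i n ⬝ᵥ (M i + ((γ - 1/2) * Δt) • K i).mulVec (d i n) := by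
  intro n
  set μ : Fin m → ℝ := (1 - γ) • lam n + γ • lam (n + 1) with hμ
  have hkey : ∀ i : Fin S,
      d i (n + 1) ⬝ᵥ (M i + ((γ - 1/2) * Δt) • K i).mulVec (d i (n + 1)) -
        d i n ⬝ᵥ (M i + ((γ - 1/2) * Δt) • K i).mulVec (d i n) =
      Δt * (μ ⬝ᵥ (C i).mulVec (d i (n + 1) + d i n)) -
        (Δt / 2) * ((d i (n + 1) + d i n) ⬝ᵥ (K i).mulVec (d i (n + 1) + d i n)) := by
    intro i
    have hMs : (M i)ᵀ = M i := by
      rw [← conjTranspose_eq_transpose_of_trivial]; exact (hM i).1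
    have hKs : (K i)ᵀ = K i := by
      rw [← conjTranspose_eq_transpose_of_trivial]; exact (hK i).1
    exact key_step (M i) (K i) hMs hKs (C i) Δt γ _ _ _ _ _ _
      (heq i n) (heq i (n + 1)) (hupd i n)
  have hzero : ∑ i : Fin S, (C i).mulVec (d i (n + 1) + d i n) = 0 := by
    simp only [mulVec_add, Finset.sum_add_distrib, hcont n, hcont (n + 1), add_zero]
  have hdiff : ∑ i : Fin S, d i (n + 1) ⬝ᵥ (M i + ((γ - 1/2) * Δt) • K i).mulVec (d i (n + 1)) -
      ∑ i : Fin S, d i n ⬝ᵥ (M i + ((γ - 1/2) * Δt) • K i).mulVec (d i n) =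
      - (Δt / 2) * ∑ i : Fin S,
        (d i (n + 1) + d i n) ⬝ᵥ (K i).mulVec (d i (n + 1) + d i n) := by
    rw [← Finset.sum_sub_distrib]
    rw [Finset.sum_congr rfl (fun i _ => hkey i)]
    rw [Finset.sum_sub_distrib, ← Finset.mul_sum, ← Finset.mul_sum]
    have hdz : ∑ i : Fin S, μ ⬝ᵥ (C i).mulVec (d i (n + 1) + d i n) = 0 := by
      have h2 : μ ⬝ᵥ ∑ i : Fin S, (C i).mulVec (d i (n + 1) + d i n) = 0 := by
        rw [hzero, dotProduct_zero]
      rw [← h2]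
      simp only [dotProduct, Finset.mul_sum, Finset.sum_apply]
      rw [Finset.sum_comm]
    rw [hdz]
    ring
  have hq : 0 ≤ ∑ i : Fin S,
      (d i (n + 1) + d i n) ⬝ᵥ (K i).mulVec (d i (n + 1) + d i n) := by
    refine Finset.sum_nonneg fun i _ => ?_
    have := (hK i).re_dotProduct_nonneg (d i (n + 1) + d i n)
    simpa using this
  have hΔ2 : 0 ≤ Δt / 2 := by linarith
  nlinarith [hdiff, hq, mul_nonneg hΔ2 hq]
end

section
/- Under the d-continuity domain decomposition method, if in addition each matrix A_i = M_i + (γ − 1/2)·Δt·K_i is positive definite, then the temperatures and the weighted rates are bounded: there exists a constant C > 0 such that for all i ∈ {1,…,S} and all n ∈ ℕ, ‖d_i(n)‖ ≤ C and ‖(1−γ)·v_i(n) + γ·v_i(n+1)‖ ≤ C. -/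
open Matrix

/-- The Euclidean norm of a vector indexed by `Fin k`. -/
noncomputable def enorm {k : ℕ} (x : Fin k → ℝ) : ℝ := Real.sqrt (x ⬝ᵥ x)

lemma herm_symm {k : ℕ} {B : Matrix (Fin k) (Fin k) ℝ} (hB : B.IsHermitian)
    (x y : Fin k → ℝ) : x ⬝ᵥ B *ᵥ y = (B *ᵥ x) ⬝ᵥ y := by
  have ht : Bᵀ = B := by
    have := hB.eq
    rwa [Matrix.conjTranspose_eq_transpose_of_trivial] at this
  rw [Matrix.dotProduct_mulVec, ← Matrix.mulVec_transpose, ht]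

lemma sum_dotProduct' {k : ℕ} {ι : Type*} (s : Finset ι) (f : ι → (Fin k → ℝ)) (v : Fin k → ℝ) :
    ∑ i ∈ s, (f i ⬝ᵥ v) = (∑ i ∈ s, f i) ⬝ᵥ v := by
  simp only [dotProduct, Finset.sum_apply, Finset.sum_mul]
  rw [Finset.sum_comm]

lemma dot_nonneg_psd {k : ℕ} {B : Matrix (Fin k) (Fin k) ℝ} (hB : B.PosSemidef)
    (x : Fin k → ℝ) : 0 ≤ x ⬝ᵥ B *ᵥ x := by
  simpa using hB.dotProduct_mulVec_nonneg x

lemma dot_nonneg_pd {k : ℕ} {B : Matrix (Fin k) (Fin k) ℝ} (hB : B.PosDef)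
    (x : Fin k → ℝ) : 0 ≤ x ⬝ᵥ B *ᵥ x := by
  rcases eq_or_ne x 0 with h | h
  · simp [h]
  · have := hB.dotProduct_mulVec_pos h; simpa using this.le

lemma pi_norm_le_sqrt_dot {k : ℕ} (u : Fin k → ℝ) : ‖u‖ ≤ Real.sqrt (u ⬝ᵥ u) := by
  rw [pi_norm_le_iff_of_nonneg (Real.sqrt_nonneg _)]
  intro j
  rw [Real.norm_eq_abs, ← Real.sqrt_sq_eq_abs]
  apply Real.sqrt_le_sqrt
  rw [sq]
  exact Finset.single_le_sum (f := fun j => u j * u j)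
    (fun j _ => mul_self_nonneg (u j)) (Finset.mem_univ j)

lemma enorm_le_sqrt_card_mul {k : ℕ} (u : Fin k → ℝ) :
    _root_.enorm u ≤ Real.sqrt k * ‖u‖ := by
  unfold _root_.enorm
  have h1 : u ⬝ᵥ u ≤ (k : ℝ) * ‖u‖^2 := by
    unfold dotProduct
    calc ∑ j, u j * u j ≤ ∑ _j : Fin k, ‖u‖^2 := by
          apply Finset.sum_le_sum
          intro j _
          have := norm_le_pi_norm u j
          have h0 : |u j| ≤ ‖u‖ := by rwa [Real.norm_eq_abs] at this
          nlinarith [abs_nonneg (u j), le_abs_self (u j), neg_abs_le (u j)]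
      _ = (k : ℝ) * ‖u‖^2 := by simp [Finset.sum_const, mul_comm]
  calc Real.sqrt (u ⬝ᵥ u) ≤ Real.sqrt ((k : ℝ) * ‖u‖^2) := Real.sqrt_le_sqrt h1
    _ = Real.sqrt k * ‖u‖ := by
        rw [Real.sqrt_mul (Nat.cast_nonneg k), Real.sqrt_sq (norm_nonneg u)]

lemma dot_self_norm {k : ℕ} (y : Fin k → ℝ) :
    y ⬝ᵥ y = ‖(WithLp.equiv 2 (Fin k → ℝ)).symm y‖^2 := by
  rw [EuclideanSpace.norm_eq, Real.sq_sqrt (by positivity)]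
  simp [dotProduct, sq]

lemma norm_antilip {k : ℕ} {B : Matrix (Fin k) (Fin k) ℝ} {Kc : NNReal}
    (hanti : AntilipschitzWith Kc (Matrix.toEuclideanLin B (𝕜 := ℝ)))
    (xe : EuclideanSpace ℝ (Fin k)) : ‖xe‖ ≤ Kc * ‖Matrix.toEuclideanLin B xe‖ := by
  have := hanti.le_mul_dist xe 0
  simpa [dist_zero_right] using this

open scoped MatrixOrder in
lemma quad_lower {k : ℕ} (A : Matrix (Fin k) (Fin k) ℝ) (hA : A.PosDef) :
    ∃ c > 0, ∀ x : Fin k → ℝ, c * (x ⬝ᵥ x) ≤ x ⬝ᵥ A *ᵥ x := by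
  set B := CFC.sqrt A with hBdef
  have hBB : B * B = A := CFC.sqrt_mul_sqrt_self A hA.posSemidef.nonneg
  have hBh : B.IsHermitian := (CFC.sqrt_nonneg A).posSemidef.1
  have key : ∀ x : Fin k → ℝ, x ⬝ᵥ A *ᵥ x = (B *ᵥ x) ⬝ᵥ (B *ᵥ x) := by
    intro x
    rw [← hBB, ← Matrix.mulVec_mulVec, herm_symm hBh]
  have hinj : LinearMap.ker (Matrix.toEuclideanLin B) = ⊥ := by
    rw [LinearMap.ker_eq_bot]
    intro x y hxy
    by_contra hne
    have h0 : (B *ᵥ (x - y : EuclideanSpace ℝ (Fin k))) = 0 := by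
      have : Matrix.toEuclideanLin B (x - y) = 0 := by rw [map_sub, hxy, sub_self]
      simpa [Matrix.toEuclideanLin_apply] using this
    have hxy0 : ((x - y : EuclideanSpace ℝ (Fin k)) : Fin k → ℝ) ≠ 0 := by
      intro h
      exact hne (sub_eq_zero.mp (by ext i; exact congrFun h i))
    have := hA.dotProduct_mulVec_pos hxy0
    rw [star_trivial, key, h0] at this
    simp at this
  obtain ⟨Kc, hKc, hanti⟩ := (Matrix.toEuclideanLin B).exists_antilipschitzWith hinj
  refine ⟨((Kc : ℝ)^2)⁻¹, by positivity, fun x => ?_⟩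
  set xe : EuclideanSpace ℝ (Fin k) := (WithLp.equiv 2 (Fin k → ℝ)).symm x with hxe
  have h1 : ‖xe‖ ≤ Kc * ‖Matrix.toEuclideanLin B xe‖ := norm_antilip hanti xe
  have h2 : x ⬝ᵥ x = ‖xe‖^2 := dot_self_norm x
  have h3 : x ⬝ᵥ A *ᵥ x = ‖Matrix.toEuclideanLin B xe‖^2 := by
    rw [key]
    have he : Matrix.toEuclideanLin B xe = (WithLp.equiv 2 (Fin k → ℝ)).symm (B *ᵥ x) := by
      rw [hxe, Matrix.toEuclideanLin_toLp]
      simp [Matrix.toLin'_apply]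
    rw [he, ← dot_self_norm]
  rw [h2, h3, inv_mul_le_iff₀ (by positivity)]
  calc ‖xe‖^2 ≤ (Kc * ‖Matrix.toEuclideanLin B xe‖)^2 := by
        apply sq_le_sq' _ h1; nlinarith [norm_nonneg xe]
    _ = (Kc:ℝ)^2 * ‖Matrix.toEuclideanLin B xe‖^2 := by ring

lemma quad_upper {k : ℕ} (Q : Matrix (Fin k) (Fin k) ℝ) :
    ∃ c > 0, ∀ x : Fin k → ℝ, (Q *ᵥ x) ⬝ᵥ (Q *ᵥ x) ≤ c * (x ⬝ᵥ x) := by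
  set f := LinearMap.toContinuousLinearMap (Matrix.toEuclideanLin Q (𝕜 := ℝ)) with hf
  refine ⟨‖f‖^2 + 1, by positivity, fun x => ?_⟩
  set xe : EuclideanSpace ℝ (Fin k) := (WithLp.equiv 2 (Fin k → ℝ)).symm x with hxe
  have h1 : ‖f xe‖ ≤ ‖f‖ * ‖xe‖ := f.le_opNorm xe
  have h2 : (Q *ᵥ x) ⬝ᵥ (Q *ᵥ x) = ‖f xe‖^2 := by
    have he : f xe = (WithLp.equiv 2 (Fin k → ℝ)).symm (Q *ᵥ x) := by
      show Matrix.toEuclideanLin Q xe = _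
      rw [hxe, Matrix.toEuclideanLin_toLp]
      simp [Matrix.toLin'_apply]
    rw [he, ← dot_self_norm]
  rw [h2, dot_self_norm x]
  have h3 : ‖f xe‖^2 ≤ ‖f‖^2 * ‖xe‖^2 := by
    nlinarith [norm_nonneg (f xe), norm_nonneg xe, norm_nonneg f]
  nlinarith [norm_nonneg xe]

open scoped MatrixOrder in
lemma Kd_bound {k : ℕ} (Ki : Matrix (Fin k) (Fin k) ℝ) (hKi : Ki.PosSemidef) :
    ∃ c > 0, ∀ x : Fin k → ℝ, (Ki *ᵥ x) ⬝ᵥ (Ki *ᵥ x) ≤ c * (x ⬝ᵥ Ki *ᵥ x) := by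
  set B := CFC.sqrt Ki with hBdef
  have hBB : B * B = Ki := CFC.sqrt_mul_sqrt_self Ki hKi.nonneg
  have hBh : B.IsHermitian := (CFC.sqrt_nonneg Ki).posSemidef.1
  have key : ∀ x : Fin k → ℝ, x ⬝ᵥ Ki *ᵥ x = (B *ᵥ x) ⬝ᵥ (B *ᵥ x) := by
    intro x
    rw [← hBB, ← Matrix.mulVec_mulVec, herm_symm hBh]
  obtain ⟨c, hc, hcb⟩ := quad_upper B
  refine ⟨c, hc, fun x => ?_⟩
  have h1 : Ki *ᵥ x = B *ᵥ (B *ᵥ x) := by rw [Matrix.mulVec_mulVec, hBB]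
  calc (Ki *ᵥ x) ⬝ᵥ (Ki *ᵥ x) = (B *ᵥ (B *ᵥ x)) ⬝ᵥ (B *ᵥ (B *ᵥ x)) := by rw [h1]
    _ ≤ c * ((B *ᵥ x) ⬝ᵥ (B *ᵥ x)) := hcb (B *ᵥ x)
    _ = c * (x ⬝ᵥ Ki *ᵥ x) := by rw [key]

lemma step_identity {k m : ℕ} (Mi Ki : Matrix (Fin k) (Fin k) ℝ) (hKh : Ki.IsHermitian)
    (Ci : Matrix (Fin m) (Fin k) ℝ) (Δt γ : ℝ) (a w : Fin k → ℝ) (l : Fin m → ℝ)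
    (hw : Mi *ᵥ w + Ki *ᵥ ((1-γ) • a + γ • (a + Δt • w)) = Ciᵀ *ᵥ l) :
    Δt * (w ⬝ᵥ (Mi + ((γ-1/2)*Δt) • Ki) *ᵥ w)
      = (a ⬝ᵥ Ki *ᵥ a - (a + Δt • w) ⬝ᵥ Ki *ᵥ (a + Δt • w))/2 + Δt * ((Ci *ᵥ w) ⬝ᵥ l) := by
  have hs := congrArg (fun z => w ⬝ᵥ z) hw
  simp only [Matrix.mulVec_add, Matrix.mulVec_smul, Matrix.add_mulVec, Matrix.smul_mulVec,
    dotProduct_add, add_dotProduct, dotProduct_smul, smul_dotProduct, smul_eq_mul] at hs ⊢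
  rw [Matrix.dotProduct_mulVec w Ciᵀ l, Matrix.vecMul_transpose] at hs
  have hsym : a ⬝ᵥ Ki *ᵥ w = w ⬝ᵥ Ki *ᵥ a := by
    rw [herm_symm hKh a w, dotProduct_comm]
  linear_combination Δt * hs + (Δt/2) * hsym

set_option maxHeartbeats 1000000 in
set_option synthInstance.maxHeartbeats 200000 in
/-- Under the d-continuity domain decomposition method, if each
`Aᵢ = Mᵢ + (γ - 1/2)·Δt·Kᵢ` is positive definite, then the temperatures `dᵢ(n)` and the
weighted rates `(1-γ)·vᵢ(n) + γ·vᵢ(n+1)` are bounded uniformly in `i` and `n`. -/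
theorem dContinuity_temperatures_and_weighted_rates_bounded
    (S m : ℕ) (hS : 1 ≤ S) (nn : Fin S → ℕ)
    (M K : ∀ i : Fin S, Matrix (Fin (nn i)) (Fin (nn i)) ℝ)
    (hM : ∀ i, (M i).PosDef) (hK : ∀ i, (K i).PosSemidef)
    (C : ∀ i : Fin S, Matrix (Fin m) (Fin (nn i)) ℝ)
    (Δt γ : ℝ) (hΔt : 0 < Δt) (hγ₀ : 0 ≤ γ) (hγ₁ : γ ≤ 1)
    (hA : ∀ i, (M i + ((γ - 1/2) * Δt) • K i).PosDef)
    (d v : ∀ i : Fin S, ℕ → (Fin (nn i) → ℝ)) (lam : ℕ → (Fin m → ℝ))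
    (heq : ∀ i n, (M i).mulVec (v i n) + (K i).mulVec (d i n) = (C i)ᵀ.mulVec (lam n))
    (hupd : ∀ i n, d i (n + 1) = d i n + Δt • ((1 - γ) • v i n + γ • v i (n + 1)))
    (hcont : ∀ n, ∑ i : Fin S, (C i).mulVec (d i n) = 0) :
    ∃ C₀ > (0 : ℝ), ∀ i : Fin S, ∀ n : ℕ,
      _root_.enorm (d i n) ≤ C₀ ∧ _root_.enorm ((1 - γ) • v i n + γ • v i (n + 1)) ≤ C₀ := by
  classical
  -- weighted rates
  set w : ∀ i : Fin S, ℕ → Fin (nn i) → ℝ := fun i n => (1 - γ) • v i n + γ • v i (n + 1)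
    with hwdef
  set A : ∀ i : Fin S, Matrix (Fin (nn i)) (Fin (nn i)) ℝ :=
    fun i => M i + ((γ - 1/2) * Δt) • K i with hAdef
  set lb : ℕ → Fin m → ℝ := fun n => (1 - γ) • lam n + γ • lam (n + 1) with hlbdef
  have hupd' : ∀ i n, d i (n + 1) = d i n + Δt • w i n := fun i n => hupd i n
  -- combined equation
  have Fcomb : ∀ i n, M i *ᵥ w i n
      + K i *ᵥ ((1 - γ) • d i n + γ • (d i n + Δt • w i n)) = (C i)ᵀ *ᵥ lb n := by
    intro i n
    have hd : d i n + Δt • w i n = d i (n + 1) := (hupd' i n).symm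
    rw [hd]
    show M i *ᵥ ((1 - γ) • v i n + γ • v i (n + 1))
      + K i *ᵥ ((1 - γ) • d i n + γ • d i (n + 1))
      = (C i)ᵀ *ᵥ ((1 - γ) • lam n + γ • lam (n + 1))
    simp only [Matrix.mulVec_add, Matrix.mulVec_smul]
    rw [← heq i n, ← heq i (n + 1)]
    simp only [smul_add]
    abel
  -- sum of C_i w_i vanishes
  have hCsum : ∀ n, ∑ i, (C i) *ᵥ w i n = 0 := by
    intro n
    have h2 : ∑ i, (C i) *ᵥ (d i (n + 1)) = ∑ i, ((C i) *ᵥ d i n + Δt • ((C i) *ᵥ w i n)) := by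
      refine Finset.sum_congr rfl fun i _ => ?_
      rw [hupd' i n]
      simp [Matrix.mulVec_add, Matrix.mulVec_smul]
    rw [hcont (n + 1), Finset.sum_add_distrib, hcont n, zero_add, ← Finset.smul_sum] at h2
    have := h2.symm
    rcases smul_eq_zero.mp this with h | h
    · exact absurd h (ne_of_gt hΔt)
    · exact h
  -- energy
  set E : ℕ → ℝ := fun n => ∑ i, d i n ⬝ᵥ (K i) *ᵥ d i n with hEdef
  have Estep : ∀ n, Δt * ∑ i, (w i n ⬝ᵥ A i *ᵥ w i n) = (E n - E (n + 1)) / 2 := by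
    intro n
    have hterm : ∀ i, Δt * (w i n ⬝ᵥ A i *ᵥ w i n)
        = (d i n ⬝ᵥ K i *ᵥ d i n - d i (n+1) ⬝ᵥ K i *ᵥ d i (n+1))/2
          + Δt * ((C i *ᵥ w i n) ⬝ᵥ lb n) := by
      intro i
      have := step_identity (M i) (K i) (hK i).1 (C i) Δt γ (d i n) (w i n) (lb n) (Fcomb i n)
      rw [← hupd' i n] at this
      exact this
    rw [Finset.mul_sum]
    calc ∑ i, Δt * (w i n ⬝ᵥ A i *ᵥ w i n)
        = ∑ i, ((d i n ⬝ᵥ K i *ᵥ d i n - d i (n+1) ⬝ᵥ K i *ᵥ d i (n+1))/2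
          + Δt * ((C i *ᵥ w i n) ⬝ᵥ lb n)) := Finset.sum_congr rfl fun i _ => hterm i
      _ = (E n - E (n+1))/2 + Δt * (∑ i, ((C i *ᵥ w i n) ⬝ᵥ lb n)) := by
          rw [Finset.sum_add_distrib, ← Finset.mul_sum]
          congr 1
          rw [hEdef]
          rw [← Finset.sum_div, Finset.sum_sub_distrib]
      _ = (E n - E (n+1))/2 := by
          rw [sum_dotProduct', hCsum n, zero_dotProduct, mul_zero, add_zero]
  have hEnn : ∀ n, 0 ≤ E n :=
    fun n => Finset.sum_nonneg fun i _ => dot_nonneg_psd (hK i) (d i n)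
  have hWnn : ∀ i n, 0 ≤ w i n ⬝ᵥ A i *ᵥ w i n := fun i n => dot_nonneg_pd (hA i) (w i n)
  have hEmono : ∀ n, E (n + 1) ≤ E n := by
    intro n
    have := Estep n
    have h2 : 0 ≤ Δt * ∑ i, (w i n ⬝ᵥ A i *ᵥ w i n) :=
      mul_nonneg hΔt.le (Finset.sum_nonneg fun i _ => hWnn i n)
    linarith
  have hE0 : ∀ n, E n ≤ E 0 := by
    intro n
    induction n with
    | zero => exact le_refl _
    | succ k ih => exact le_trans (hEmono k) ih
  have hWbound : ∀ i n, w i n ⬝ᵥ A i *ᵥ w i n ≤ E 0 / (2 * Δt) := by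
    intro i n
    have h1 : w i n ⬝ᵥ A i *ᵥ w i n ≤ ∑ j, (w j n ⬝ᵥ A j *ᵥ w j n) :=
      Finset.single_le_sum (fun j _ => hWnn j n) (Finset.mem_univ i)
    have h2 := Estep n
    have h3 : E n - E (n + 1) ≤ E 0 := by
      have := hE0 n
      have := hEnn (n + 1)
      linarith
    rw [le_div_iff₀ (by positivity : (0:ℝ) < 2 * Δt)]
    nlinarith [hWnn i n, mul_le_mul_of_nonneg_right h1 hΔt.le]
  -- conservation of M-pairings against kernel-constraint directions
  have hcons : ∀ (z : ∀ i, Fin (nn i) → ℝ), (∀ i, K i *ᵥ z i = 0) →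
      (∑ i, C i *ᵥ z i = 0) → ∀ n,
      ∑ i, z i ⬝ᵥ (M i *ᵥ d i n) = ∑ i, z i ⬝ᵥ (M i *ᵥ d i 0) := by
    intro z hz1 hz2 n
    induction n with
    | zero => rfl
    | succ k ih =>
      rw [← ih]
      have hMw : ∀ i, z i ⬝ᵥ (M i *ᵥ w i k) = (C i *ᵥ z i) ⬝ᵥ lb k := by
        intro i
        have hf := Fcomb i k
        have hrw : M i *ᵥ w i k
            = (C i)ᵀ *ᵥ lb k - K i *ᵥ ((1-γ) • d i k + γ • (d i k + Δt • w i k)) := by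
          rw [← hf]; abel
        rw [hrw, dotProduct_sub]
        have hz0 : z i ⬝ᵥ (K i *ᵥ ((1-γ) • d i k + γ • (d i k + Δt • w i k))) = 0 := by
          rw [herm_symm (hK i).1, hz1 i, zero_dotProduct]
        rw [hz0, sub_zero, Matrix.dotProduct_mulVec, Matrix.vecMul_transpose]
      have hstep : ∀ i, z i ⬝ᵥ (M i *ᵥ d i (k+1))
          = z i ⬝ᵥ (M i *ᵥ d i k) + Δt * ((C i *ᵥ z i) ⬝ᵥ lb k) := by
        intro i
        rw [hupd' i k]
        simp only [Matrix.mulVec_add, Matrix.mulVec_smul, dotProduct_add, dotProduct_smul,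
          smul_eq_mul]
        rw [hMw i]
      calc ∑ i, z i ⬝ᵥ (M i *ᵥ d i (k+1))
          = ∑ i, (z i ⬝ᵥ (M i *ᵥ d i k) + Δt * ((C i *ᵥ z i) ⬝ᵥ lb k)) :=
            Finset.sum_congr rfl fun i _ => hstep i
        _ = ∑ i, z i ⬝ᵥ (M i *ᵥ d i k) + Δt * ((∑ i, C i *ᵥ z i) ⬝ᵥ lb k) := by
            rw [Finset.sum_add_distrib, ← Finset.mul_sum, sum_dotProduct']
        _ = ∑ i, z i ⬝ᵥ (M i *ᵥ d i k) := by
            rw [hz2, zero_dotProduct, mul_zero, add_zero]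
  -- the subspace of kernel-constraint directions
  let U : Submodule ℝ (∀ i, Fin (nn i) → ℝ) :=
    { carrier := {z | (∀ i, K i *ᵥ z i = 0) ∧ ∑ i, C i *ᵥ z i = 0}
      add_mem' := by
        rintro a b ⟨ha1, ha2⟩ ⟨hb1, hb2⟩
        refine ⟨fun i => ?_, ?_⟩
        · show K i *ᵥ (a i + b i) = 0
          rw [Matrix.mulVec_add, ha1 i, hb1 i, add_zero]
        · show ∑ i, C i *ᵥ (a i + b i) = 0
          simp only [Matrix.mulVec_add]
          rw [Finset.sum_add_distrib, ha2, hb2, add_zero]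
      zero_mem' := by
        refine ⟨fun i => ?_, ?_⟩
        · show K i *ᵥ (0 : Fin (nn i) → ℝ) = 0
          simp
        · show ∑ i, C i *ᵥ (0 : Fin (nn i) → ℝ) = 0
          simp
      smul_mem' := by
        rintro c a ⟨ha1, ha2⟩
        refine ⟨fun i => ?_, ?_⟩
        · show K i *ᵥ (c • a i) = 0
          rw [Matrix.mulVec_smul, ha1 i, smul_zero]
        · show ∑ i, C i *ᵥ (c • a i) = 0
          simp only [Matrix.mulVec_smul]
          rw [← Finset.smul_sum, ha2, smul_zero] }
  let b := Module.finBasis ℝ ↥U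
  -- the three component linear maps
  let L1 : (∀ i, Fin (nn i) → ℝ) →ₗ[ℝ] (∀ i, Fin (nn i) → ℝ) :=
    { toFun := fun y i => K i *ᵥ y i
      map_add' := fun y z => by
        funext i
        show K i *ᵥ (y i + z i) = K i *ᵥ y i + K i *ᵥ z i
        rw [Matrix.mulVec_add]
      map_smul' := fun c y => by
        funext i
        show K i *ᵥ (c • y i) = c • (K i *ᵥ y i)
        rw [Matrix.mulVec_smul] }
  let L2 : (∀ i, Fin (nn i) → ℝ) →ₗ[ℝ] (Fin m → ℝ) :=
    { toFun := fun y => ∑ i, C i *ᵥ y i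
      map_add' := fun y z => by
        simp only [Pi.add_apply, Matrix.mulVec_add]
        rw [Finset.sum_add_distrib]
      map_smul' := fun c y => by
        simp only [Pi.smul_apply, Matrix.mulVec_smul, RingHom.id_apply]
        rw [← Finset.smul_sum] }
  let L3 : (∀ i, Fin (nn i) → ℝ) →ₗ[ℝ] (Fin (Module.finrank ℝ ↥U) → ℝ) :=
    { toFun := fun y j => ∑ i, ((b j : ∀ i, Fin (nn i) → ℝ) i) ⬝ᵥ (M i *ᵥ y i)
      map_add' := fun y z => by
        funext j
        simp only [Pi.add_apply, Matrix.mulVec_add, dotProduct_add]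
        rw [Finset.sum_add_distrib]
      map_smul' := fun c y => by
        funext j
        simp only [Pi.smul_apply, Matrix.mulVec_smul, dotProduct_smul, RingHom.id_apply,
          smul_eq_mul]
        rw [← Finset.mul_sum] }
  let L := L1.prod (L2.prod L3)
  have hker : LinearMap.ker L = ⊥ := by
    rw [LinearMap.ker_eq_bot']
    intro z hz
    have h1 : ∀ i, K i *ᵥ z i = 0 := fun i => congrFun (congrArg Prod.fst hz) i
    have h2 : ∑ i, C i *ᵥ z i = 0 := congrArg (fun p => p.2.1) hz
    have h3 : ∀ j, ∑ i, ((b j : ∀ i, Fin (nn i) → ℝ) i) ⬝ᵥ (M i *ᵥ z i) = 0 :=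
      fun j => congrFun (congrArg (fun p => p.2.2) hz) j
    have hzU : z ∈ U := ⟨h1, h2⟩
    let φ : (∀ i, Fin (nn i) → ℝ) →ₗ[ℝ] ℝ :=
      { toFun := fun y => ∑ i, y i ⬝ᵥ (M i *ᵥ z i)
        map_add' := fun y y' => by
          simp only [Pi.add_apply, add_dotProduct]
          rw [Finset.sum_add_distrib]
        map_smul' := fun c y => by
          simp only [Pi.smul_apply, smul_dotProduct, RingHom.id_apply, smul_eq_mul]
          rw [← Finset.mul_sum] }
    have hφ : φ.comp U.subtype = 0 := by
      apply b.ext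
      intro j
      show φ ((b j : ∀ i, Fin (nn i) → ℝ)) = 0
      exact h3 j
    have hzz : ∑ i, z i ⬝ᵥ (M i *ᵥ z i) = 0 := by
      have := LinearMap.congr_fun hφ ⟨z, hzU⟩
      exact this
    have hterm := (Finset.sum_eq_zero_iff_of_nonneg
      (fun i _ => dot_nonneg_pd (hM i) (z i))).mp hzz
    funext i
    by_contra hne
    have hzi : z i ≠ 0 := by
      intro h0
      exact hne (by rw [h0]; rfl)
    have := (hM i).dotProduct_mulVec_pos hzi
    rw [star_trivial] at this
    rw [hterm i (Finset.mem_univ i)] at this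
    exact lt_irrefl 0 this
  obtain ⟨K₀, hK₀pos, hanti⟩ := L.exists_antilipschitzWith hker
  have hVle : ∀ y : (∀ i, Fin (nn i) → ℝ), ‖y‖ ≤ (K₀ : ℝ) * ‖L y‖ := by
    intro y
    have h := hanti.le_mul_dist y 0
    rwa [dist_zero_right, dist_eq_norm, map_zero, sub_zero] at h
  choose cA hcApos hcA using fun i => quad_lower (A i) (hA i)
  choose cK hcKpos hcK using fun i => Kd_bound (K i) (hK i)
  set q : ℝ := ∑ i, (cA i)⁻¹ with hq
  have hqpos : ∀ i, (cA i)⁻¹ ≤ q := fun i =>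
    Finset.single_le_sum (f := fun j => (cA j)⁻¹)
      (fun j _ => inv_nonneg.mpr (hcApos j).le) (Finset.mem_univ i)
  set cKs : ℝ := ∑ i, cK i with hcKs
  have hcKsle : ∀ i, cK i ≤ cKs := fun i =>
    Finset.single_le_sum (f := fun j => cK j) (fun j _ => (hcKpos j).le) (Finset.mem_univ i)
  have hcKsnn : 0 ≤ cKs := Finset.sum_nonneg fun j _ => (hcKpos j).le
  set Cw : ℝ := Real.sqrt (q * (E 0 / (2 * Δt))) with hCwdef
  set D₁ : ℝ := Real.sqrt (cKs * E 0) with hD₁def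
  set D₃ : ℝ := ‖(fun j => ∑ i, ((b j : ∀ i, Fin (nn i) → ℝ) i) ⬝ᵥ (M i *ᵥ d i 0))‖ with hD₃def
  set D : ℝ := max D₁ D₃ with hDdef
  have hDnn : 0 ≤ D := le_trans (Real.sqrt_nonneg _) (le_max_left _ _)
  have hLband : ∀ n : ℕ, ‖L (fun i => d i n)‖ ≤ D := by
    intro n
    have hdKd : ∀ i, d i n ⬝ᵥ (K i *ᵥ d i n) ≤ E 0 := by
      intro i
      refine le_trans ?_ (hE0 n)
      exact Finset.single_le_sum (f := fun j => d j n ⬝ᵥ (K j *ᵥ d j n))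
        (fun j _ => dot_nonneg_psd (hK j) (d j n)) (Finset.mem_univ i)
    rw [norm_prod_le_iff]
    constructor
    · show ‖(fun i => K i *ᵥ d i n)‖ ≤ D
      rw [pi_norm_le_iff_of_nonneg hDnn]
      intro i
      calc ‖K i *ᵥ d i n‖ ≤ Real.sqrt ((K i *ᵥ d i n) ⬝ᵥ (K i *ᵥ d i n)) := pi_norm_le_sqrt_dot _
        _ ≤ Real.sqrt (cKs * E 0) := by
            apply Real.sqrt_le_sqrt
            calc (K i *ᵥ d i n) ⬝ᵥ (K i *ᵥ d i n) ≤ cK i * (d i n ⬝ᵥ (K i *ᵥ d i n)) :=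
                hcK i (d i n)
              _ ≤ cKs * E 0 := by
                apply mul_le_mul (hcKsle i) (hdKd i) (dot_nonneg_psd (hK i) (d i n)) hcKsnn
        _ ≤ D := le_max_left _ _
    rw [norm_prod_le_iff]
    constructor
    · show ‖∑ i, C i *ᵥ d i n‖ ≤ D
      rw [hcont n, norm_zero]
      exact hDnn
    · show ‖(fun j => ∑ i, ((b j : ∀ i, Fin (nn i) → ℝ) i) ⬝ᵥ (M i *ᵥ d i n))‖ ≤ D
      have hEqfun : (fun j => ∑ i, ((b j : ∀ i, Fin (nn i) → ℝ) i) ⬝ᵥ (M i *ᵥ d i n))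
          = (fun j => ∑ i, ((b j : ∀ i, Fin (nn i) → ℝ) i) ⬝ᵥ (M i *ᵥ d i 0)) := by
        funext j
        exact hcons _ (b j).2.1 (b j).2.2 n
      rw [hEqfun]
      exact le_max_right _ _
  set sN : ℝ := Real.sqrt (∑ i, (nn i : ℝ)) with hsNdef
  have hsNle : ∀ i, Real.sqrt (nn i) ≤ sN := by
    intro i
    apply Real.sqrt_le_sqrt
    exact Finset.single_le_sum (f := fun j => ((nn j : ℝ)))
      (fun j _ => Nat.cast_nonneg _) (Finset.mem_univ i)
  refine ⟨sN * ((K₀:ℝ) * D) + Cw + 1, by positivity, fun i n => ?_⟩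
  have hCwnn : 0 ≤ Cw := Real.sqrt_nonneg _
  have hsnn : 0 ≤ sN := Real.sqrt_nonneg _
  have hKnn : 0 ≤ (K₀ : ℝ) := K₀.2
  constructor
  · have h1 : ‖d i n‖ ≤ ‖(fun j => d j n)‖ := norm_le_pi_norm (fun j => d j n) i
    have h2 : ‖(fun j => d j n)‖ ≤ (K₀:ℝ) * ‖L (fun j => d j n)‖ := hVle _
    have h3 : ‖L (fun j => d j n)‖ ≤ D := hLband n
    have h4 : ‖(fun j => d j n)‖ ≤ (K₀:ℝ) * D :=
      le_trans h2 (mul_le_mul_of_nonneg_left h3 hKnn)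
    calc _root_.enorm (d i n) ≤ Real.sqrt (nn i) * ‖d i n‖ := enorm_le_sqrt_card_mul _
      _ ≤ sN * ((K₀:ℝ) * D) := by
          apply mul_le_mul (hsNle i) (le_trans h1 h4) (norm_nonneg _) hsnn
      _ ≤ sN * ((K₀:ℝ) * D) + Cw + 1 := by linarith
  · have hww : w i n ⬝ᵥ w i n ≤ q * (E 0 / (2 * Δt)) := by
      have ha := hcA i (w i n)
      have hb := hWbound i n
      have hX : 0 ≤ E 0 / (2 * Δt) := div_nonneg (hEnn 0) (by positivity)
      have h5 : w i n ⬝ᵥ w i n ≤ (cA i)⁻¹ * (E 0 / (2 * Δt)) := by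
        rw [inv_mul_eq_div, le_div_iff₀ (hcApos i)]
        nlinarith [ha, hb, hcApos i]
      exact le_trans h5 (mul_le_mul_of_nonneg_right (hqpos i) hX)
    calc _root_.enorm (w i n) ≤ Real.sqrt (q * (E 0 / (2 * Δt))) := by
          unfold _root_.enorm
          exact Real.sqrt_le_sqrt hww
      _ ≤ sN * ((K₀:ℝ) * D) + Cw + 1 := by
          have : Real.sqrt (q * (E 0 / (2 * Δt))) = Cw := rfl
          rw [this]
          have hD0 : 0 ≤ sN * ((K₀:ℝ) * D) := by positivity
          linarith
end

section
/- Under the d-continuity domain decomposition method with linearly independent constraints, the weighted Lagrange multipliers are determined explicitly by the temperatures: for every n ∈ ℕ, (1−γ)·λ(n) + γ·λ(n+1) = −(1/Δt)·G⁻¹·∑_{i=1}^S C_i·M̃_i⁻¹·(M_i − (1−γ)·Δt·K_i)·d_i(n), where M̃_i := M_i + γ·Δt·K_i and G := ∑_{i=1}^S C_i·M̃_i⁻¹·C_iᵀ. -/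
open Matrix

lemma my_sum_mulVec {ι m n : Type*} [Fintype n] (s : Finset ι)
    (A : ι → Matrix m n ℝ) (x : n → ℝ) :
    (∑ i ∈ s, A i) *ᵥ x = ∑ i ∈ s, (A i) *ᵥ x := by
  induction s using Finset.cons_induction with
  | empty => simp [Matrix.zero_mulVec]
  | cons a s ha ih => simp [Matrix.add_mulVec, ih]

lemma my_dotProduct_sum {ι n : Type*} [Fintype n] (s : Finset ι)
    (x : n → ℝ) (f : ι → (n → ℝ)) :
    x ⬝ᵥ (∑ i ∈ s, f i) = ∑ i ∈ s, x ⬝ᵥ f i := by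
  induction s using Finset.cons_induction with
  | empty => simp
  | cons a s ha ih => simp [dotProduct_add, ih]

lemma my_smul_posSemidef {n : Type*} [Fintype n] {c : ℝ} (hc : 0 ≤ c)
    {A : Matrix n n ℝ} (hA : A.PosSemidef) : (c • A).PosSemidef := by
  refine posSemidef_iff_dotProduct_mulVec.mpr ⟨?_, fun x => ?_⟩
  · have h1 := hA.1
    simp only [Matrix.IsHermitian, conjTranspose_smul, star_trivial] at h1 ⊢
    rw [h1]
  · rw [smul_mulVec, dotProduct_smul, smul_eq_mul]
    exact mul_nonneg hc (hA.dotProduct_mulVec_nonneg x)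

/-- Under the d-continuity domain decomposition method with linearly independent
constraints, the weighted Lagrange multipliers are explicitly determined by the
temperatures:
`(1-γ)·λ(n) + γ·λ(n+1) = -(1/Δt)·G⁻¹·∑ᵢ Cᵢ·M̃ᵢ⁻¹·(Mᵢ - (1-γ)·Δt·Kᵢ)·dᵢ(n)`,
where `M̃ᵢ = Mᵢ + γ·Δt·Kᵢ` and `G = ∑ᵢ Cᵢ·M̃ᵢ⁻¹·Cᵢᵀ`. -/
theorem dContinuity_lagrange_multiplier_formula
    (S m : ℕ) (hS : 1 ≤ S) (nn : Fin S → ℕ)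
    (M K : ∀ i : Fin S, Matrix (Fin (nn i)) (Fin (nn i)) ℝ)
    (hM : ∀ i, (M i).PosDef) (hK : ∀ i, (K i).PosSemidef)
    (C : ∀ i : Fin S, Matrix (Fin m) (Fin (nn i)) ℝ)
    (Δt γ : ℝ) (hΔt : 0 < Δt) (hγ₀ : 0 ≤ γ) (hγ₁ : γ ≤ 1)
    (d v : ∀ i : Fin S, ℕ → (Fin (nn i) → ℝ)) (lam : ℕ → (Fin m → ℝ))
    (heq : ∀ i n, (M i).mulVec (v i n) + (K i).mulVec (d i n) = (C i)ᵀ.mulVec (lam n))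
    (hupd : ∀ i n, d i (n + 1) = d i n + Δt • ((1 - γ) • v i n + γ • v i (n + 1)))
    (hcont : ∀ n, ∑ i : Fin S, (C i).mulVec (d i n) = 0)
    (hind : ∀ μ : Fin m → ℝ, (∀ i, (C i)ᵀ.mulVec μ = 0) → μ = 0) :
    ∀ n : ℕ,
      (1 - γ) • lam n + γ • lam (n + 1) =
        (-(1 / Δt)) •
          (∑ i : Fin S, C i * (M i + (γ * Δt) • K i)⁻¹ * (C i)ᵀ)⁻¹.mulVec
            (∑ i : Fin S,
              (C i * (M i + (γ * Δt) • K i)⁻¹ *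
                (M i - ((1 - γ) * Δt) • K i)).mulVec (d i n)) := by
  intro n
  set Mt : ∀ i : Fin S, Matrix (Fin (nn i)) (Fin (nn i)) ℝ :=
    fun i => M i + (γ * Δt) • K i with hMtdef
  have hMt : ∀ i, (Mt i).PosDef := fun i =>
    (hM i).add_posSemidef (my_smul_posSemidef (by positivity) (hK i))
  have hdet : ∀ i, IsUnit (Mt i).det := fun i => (hMt i).det_pos.ne'.isUnit
  have hAinv : ∀ i, (Mt i)⁻¹.PosDef := fun i => (hMt i).inv
  set G : Matrix (Fin m) (Fin m) ℝ := ∑ i : Fin S, C i * (Mt i)⁻¹ * (C i)ᵀ with hGdef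
  set w : Fin m → ℝ := (1 - γ) • lam n + γ • lam (n + 1) with hwdef
  -- key per-subdomain identity
  have hkey : ∀ i, (Mt i) *ᵥ d i (n + 1) =
      (M i - ((1 - γ) * Δt) • K i) *ᵥ d i n + Δt • ((C i)ᵀ *ᵥ w) := by
    intro i
    have hv : ∀ k, (M i) *ᵥ v i k = (C i)ᵀ *ᵥ lam k - (K i) *ᵥ d i k :=
      fun k => eq_sub_of_add_eq (heq i k)
    simp only [hMtdef, hwdef, hupd i n, add_mulVec, sub_mulVec, mulVec_add, mulVec_smul,
      smul_mulVec, hv]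
    module
  -- express d i (n+1) via the inverse
  have hd1 : ∀ i, d i (n + 1) =
      (Mt i)⁻¹ *ᵥ ((M i - ((1 - γ) * Δt) • K i) *ᵥ d i n + Δt • ((C i)ᵀ *ᵥ w)) := by
    intro i
    rw [← hkey i, mulVec_mulVec, nonsing_inv_mul _ (hdet i), one_mulVec]
  -- sum the constraint at n+1
  have hsum : (∑ i : Fin S,
      (C i * (Mt i)⁻¹ * (M i - ((1 - γ) * Δt) • K i)) *ᵥ d i n) + Δt • (G *ᵥ w) = 0 := by
    have h0 := hcont (n + 1)
    calc (∑ i : Fin S,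
          (C i * (Mt i)⁻¹ * (M i - ((1 - γ) * Δt) • K i)) *ᵥ d i n) + Δt • (G *ᵥ w)
        = ∑ i : Fin S, (C i) *ᵥ d i (n + 1) := by
          rw [hGdef, my_sum_mulVec, Finset.smul_sum, ← Finset.sum_add_distrib]
          refine Finset.sum_congr rfl fun i _ => ?_
          rw [hd1 i]
          simp only [mulVec_add, mulVec_smul, mulVec_mulVec, Matrix.mul_assoc]
      _ = 0 := h0
  -- G is positive definite
  have hG : G.PosDef := by
    rw [posDef_iff_dotProduct_mulVec]
    constructor
    · simp only [hGdef, Matrix.IsHermitian]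
      rw [conjTranspose_sum]
      refine Finset.sum_congr rfl fun i _ => ?_
      rw [conjTranspose_mul, conjTranspose_mul, (hAinv i).isHermitian.eq,
        conjTranspose_eq_transpose_of_trivial, conjTranspose_eq_transpose_of_trivial,
        transpose_transpose, Matrix.mul_assoc]
    · intro x hx
      have hterm : ∀ i : Fin S, star x ⬝ᵥ (C i * (Mt i)⁻¹ * (C i)ᵀ) *ᵥ x
          = star ((C i)ᵀ *ᵥ x) ⬝ᵥ ((Mt i)⁻¹ *ᵥ ((C i)ᵀ *ᵥ x)) := by
        intro i
        rw [← mulVec_mulVec, ← mulVec_mulVec, dotProduct_mulVec, star_trivial, star_trivial,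
          ← mulVec_transpose]
      rw [hGdef, my_sum_mulVec, my_dotProduct_sum]
      obtain ⟨i₀, hi₀⟩ : ∃ i, (C i)ᵀ *ᵥ x ≠ 0 := by
        by_contra h
        push_neg at h
        exact hx (hind x h)
      refine Finset.sum_pos' (fun i _ => ?_) ⟨i₀, Finset.mem_univ _, ?_⟩
      · rw [hterm i]
        exact (hAinv i).posSemidef.dotProduct_mulVec_nonneg _
      · rw [hterm i₀]
        exact (hAinv i₀).dotProduct_mulVec_pos hi₀
  have hGdet : IsUnit G.det := hG.det_pos.ne'.isUnit
  -- solve for w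
  have hGw : G *ᵥ w = (-(1 / Δt)) • (∑ i : Fin S,
      (C i * (Mt i)⁻¹ * (M i - ((1 - γ) * Δt) • K i)) *ᵥ d i n) := by
    have hne : Δt ≠ 0 := hΔt.ne'
    have h1 : Δt • (G *ᵥ w) = -(∑ i : Fin S,
        (C i * (Mt i)⁻¹ * (M i - ((1 - γ) * Δt) • K i)) *ᵥ d i n) :=
      eq_neg_of_add_eq_zero_right hsum
    have h2 : (∑ i : Fin S,
        (C i * (Mt i)⁻¹ * (M i - ((1 - γ) * Δt) • K i)) *ᵥ d i n)
        = -(Δt • (G *ᵥ w)) := by rw [h1, neg_neg]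
    rw [h2, smul_neg, neg_smul, neg_neg, smul_smul, one_div, inv_mul_cancel₀ hne, one_smul]
  have : w = (-(1 / Δt)) • (G⁻¹ *ᵥ (∑ i : Fin S,
      (C i * (Mt i)⁻¹ * (M i - ((1 - γ) * Δt) • K i)) *ᵥ d i n)) := by
    rw [← mulVec_smul, ← hGw, mulVec_mulVec, nonsing_inv_mul _ hGdet, one_mulVec]
  exact this
end

section
/- Under the v-continuity domain decomposition method, if in addition each matrix A_i = M_i + (γ − 1/2)·Δt·K_i is positive definite, then the rates and the temperature jumps are bounded: there exists a constant C > 0 such that for all i ∈ {1,…,S} and all n ∈ ℕ, ‖v_i(n)‖ ≤ C and ‖d_i(n+1) − d_i(n)‖ ≤ C. -/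
open Matrix

lemma dp_self_nonneg {k : ℕ} (x : Fin k → ℝ) : 0 ≤ x ⬝ᵥ x :=
  Finset.sum_nonneg fun _ _ => mul_self_nonneg _

lemma enorm_nonneg' {k : ℕ} (x : Fin k → ℝ) : 0 ≤ _root_.enorm x := Real.sqrt_nonneg _

lemma norm_symm_eq {k : ℕ} (x : Fin k → ℝ) :
    ‖(WithLp.equiv 2 (Fin k → ℝ)).symm x‖ = Real.sqrt (x ⬝ᵥ x) := by
  rw [EuclideanSpace.norm_eq]
  congr 1
  simp [dotProduct, Real.norm_eq_abs, sq_abs, sq]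

lemma enorm_eq {k : ℕ} (x : Fin k → ℝ) :
    _root_.enorm x = ‖(WithLp.equiv 2 (Fin k → ℝ)).symm x‖ := (norm_symm_eq x).symm

lemma enorm_smul' {k : ℕ} (a : ℝ) (x : Fin k → ℝ) : _root_.enorm (a • x) = |a| * _root_.enorm x := by
  rw [enorm_eq, enorm_eq, ← Real.norm_eq_abs, ← norm_smul, WithLp.equiv_symm_apply, WithLp.toLp_smul]

lemma enorm_add_le' {k : ℕ} (x y : Fin k → ℝ) : _root_.enorm (x + y) ≤ _root_.enorm x + _root_.enorm y := by
  rw [enorm_eq, enorm_eq, enorm_eq, WithLp.equiv_symm_apply, WithLp.toLp_add]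
  exact norm_add_le _ _

lemma dp_self_pos {k : ℕ} {x : Fin k → ℝ} (hx : x ≠ 0) : 0 < x ⬝ᵥ x := by
  rcases (dp_self_nonneg x).lt_or_eq with h | h
  · exact h
  · exfalso; apply hx; funext i
    have := (Finset.sum_eq_zero_iff_of_nonneg
      (fun j _ => mul_self_nonneg (x j))).mp h.symm i (Finset.mem_univ i)
    exact mul_self_eq_zero.mp this

lemma dotProduct_finsum {k : ℕ} {ι : Type*} (s : Finset ι) (x : Fin k → ℝ) (f : ι → Fin k → ℝ) :
    x ⬝ᵥ (∑ i ∈ s, f i) = ∑ i ∈ s, x ⬝ᵥ f i := by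
  simp only [dotProduct, Finset.sum_apply, Finset.mul_sum]
  exact Finset.sum_comm

lemma dot_symm {k : ℕ} {A : Matrix (Fin k) (Fin k) ℝ} (h : Aᵀ = A) (x y : Fin k → ℝ) :
    x ⬝ᵥ A.mulVec y = y ⬝ᵥ A.mulVec x :=
  calc x ⬝ᵥ A *ᵥ y = (x ᵥ* A) ⬝ᵥ y := dotProduct_mulVec _ _ _
    _ = (x ᵥ* Aᵀ) ⬝ᵥ y := by rw [h]
    _ = (A *ᵥ x) ⬝ᵥ y := by rw [vecMul_transpose]
    _ = y ⬝ᵥ (A *ᵥ x) := dotProduct_comm _ _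

lemma dot_transpose {k m : ℕ} (B : Matrix (Fin m) (Fin k) ℝ) (x : Fin k → ℝ) (y : Fin m → ℝ) :
    x ⬝ᵥ Bᵀ.mulVec y = y ⬝ᵥ B.mulVec x := by
  rw [Matrix.mulVec_transpose, dotProduct_comm, ← Matrix.dotProduct_mulVec]

lemma posdef_coercive {k : ℕ} {A : Matrix (Fin k) (Fin k) ℝ} (hA : A.PosDef) :
    ∃ μ > (0:ℝ), ∀ x : Fin k → ℝ, μ * (x ⬝ᵥ x) ≤ x ⬝ᵥ A.mulVec x := by
  rcases Nat.eq_zero_or_pos k with hk | hk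
  · subst hk
    exact ⟨1, one_pos, fun x => by simp [dotProduct]⟩
  · set E := EuclideanSpace ℝ (Fin k)
    set eqv := WithLp.equiv 2 (Fin k → ℝ) with heqv
    set f : E → ℝ := fun x => (eqv x) ⬝ᵥ A.mulVec (eqv x) with hf
    have hco : ∀ i, Continuous fun x : E => (eqv x) i := fun i =>
      (continuous_apply i).comp (PiLp.continuousLinearEquiv 2 ℝ (fun _ : Fin k => ℝ)).continuous
    have hfc : Continuous f := by
      simp only [hf, Matrix.mulVec, dotProduct]
      exact continuous_finset_sum _ fun i _ => (hco i).mul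
        (continuous_finset_sum _ fun j _ => continuous_const.mul (hco j))
    have hsph : IsCompact (Metric.sphere (0:E) 1) := isCompact_sphere 0 1
    have hne : (Metric.sphere (0:E) 1).Nonempty := by
      haveI : Nonempty (Fin k) := ⟨⟨0, hk⟩⟩
      haveI : Nontrivial E := inferInstance
      exact NormedSpace.sphere_nonempty.2 zero_le_one
    obtain ⟨x₀, hx₀s, hmin⟩ := hsph.exists_isMinOn hne hfc.continuousOn
    have hx₀norm : ‖x₀‖ = 1 := by simpa using mem_sphere_zero_iff_norm.mp hx₀s
    have hx₀ne : eqv x₀ ≠ 0 := by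
      intro h
      have h0 : x₀ = (0 : E) := eqv.injective (by rw [h]; rfl)
      rw [h0] at hx₀norm; simp at hx₀norm
    refine ⟨f x₀, hA.dotProduct_mulVec_pos hx₀ne, fun x => ?_⟩
    rcases eq_or_ne x 0 with rfl | hx
    · simp [dotProduct]
    · set c : ℝ := Real.sqrt (x ⬝ᵥ x) with hc
      have hxx : 0 < x ⬝ᵥ x := dp_self_pos hx
      have hcpos : 0 < c := Real.sqrt_pos.2 hxx
      have hcc : c * c = x ⬝ᵥ x := Real.mul_self_sqrt (dp_self_nonneg x)
      set y : E := eqv.symm (c⁻¹ • x) with hy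
      have hyn : ‖y‖ = 1 := by
        have h1 : (c⁻¹ • x) ⬝ᵥ (c⁻¹ • x) = 1 := by
          rw [smul_dotProduct, dotProduct_smul, smul_eq_mul, smul_eq_mul, ← hcc]
          field_simp
        rw [hy, norm_symm_eq, h1, Real.sqrt_one]
      have hys : y ∈ Metric.sphere (0:E) 1 := by simpa [mem_sphere_zero_iff_norm]
      have hfy : f x₀ ≤ f y := hmin hys
      have heqy : eqv y = c⁻¹ • x := by rw [hy]; exact eqv.apply_symm_apply _
      have hfyx : f y = c⁻¹ * c⁻¹ * (x ⬝ᵥ A.mulVec x) := by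
        simp only [hf, heqy, Matrix.mulVec_smul, smul_dotProduct, dotProduct_smul,
          smul_eq_mul]
        ring
      have hxax : x ⬝ᵥ A.mulVec x = (x ⬝ᵥ x) * f y := by
        rw [hfyx, ← hcc]; field_simp
      rw [hxax]
      have := mul_le_mul_of_nonneg_left hfy (dp_self_nonneg x)
      linarith

/-- Under the v-continuity domain decomposition method, if each
`Aᵢ = Mᵢ + (γ - 1/2)·Δt·Kᵢ` is positive definite, then the rates `vᵢ(n)` and the
temperature jumps `dᵢ(n+1) - dᵢ(n)` are bounded uniformly in `i` and `n`. -/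
theorem vContinuity_rates_and_jumps_bounded
    (S m : ℕ) (hS : 1 ≤ S) (nn : Fin S → ℕ)
    (M K : ∀ i : Fin S, Matrix (Fin (nn i)) (Fin (nn i)) ℝ)
    (hM : ∀ i, (M i).PosDef) (hK : ∀ i, (K i).PosSemidef)
    (C : ∀ i : Fin S, Matrix (Fin m) (Fin (nn i)) ℝ)
    (Δt γ : ℝ) (hΔt : 0 < Δt) (hγ₀ : 0 ≤ γ) (hγ₁ : γ ≤ 1)
    (hA : ∀ i, (M i + ((γ - 1/2) * Δt) • K i).PosDef)
    (d v : ∀ i : Fin S, ℕ → (Fin (nn i) → ℝ)) (lam : ℕ → (Fin m → ℝ))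
    (heq : ∀ i n, (M i).mulVec (v i n) + (K i).mulVec (d i n) = (C i)ᵀ.mulVec (lam n))
    (hupd : ∀ i n, d i (n + 1) = d i n + Δt • ((1 - γ) • v i n + γ • v i (n + 1)))
    (hcont : ∀ n, ∑ i : Fin S, (C i).mulVec (v i n) = 0) :
    ∃ C₀ > (0 : ℝ), ∀ i : Fin S, ∀ n : ℕ,
      _root_.enorm (v i n) ≤ C₀ ∧ _root_.enorm (d i (n + 1) - d i n) ≤ C₀ := by
  classical
  set A : ∀ i : Fin S, Matrix (Fin (nn i)) (Fin (nn i)) ℝ :=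
    fun i => M i + ((γ - 1/2) * Δt) • K i with hAdef
  set e : ∀ i : Fin S, ℕ → Fin (nn i) → ℝ :=
    fun i n => d i n - ((γ - 1/2) * Δt) • v i n with hedef
  set Q : ℕ → ℝ := fun n => ∑ i, v i n ⬝ᵥ (A i).mulVec (v i n) with hQdef
  -- symmetry of A i
  have hAsymm : ∀ i, (A i)ᵀ = A i := fun i => by
    rw [← Matrix.conjTranspose_eq_transpose_of_trivial]; exact (hA i).1
  have hKpsd : ∀ i (x : Fin (nn i) → ℝ), 0 ≤ x ⬝ᵥ (K i).mulVec x := fun i x => by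
    simpa using (hK i).dotProduct_mulVec_nonneg x
  have hApsd : ∀ i (x : Fin (nn i) → ℝ), 0 ≤ x ⬝ᵥ (A i).mulVec x := fun i x => by
    have h := (hA i).posSemidef.dotProduct_mulVec_nonneg x
    rw [star_trivial] at h
    exact h
  -- transformed equations
  have h1 : ∀ i n, (A i).mulVec (v i n) + (K i).mulVec (e i n) = (C i)ᵀ.mulVec (lam n) := by
    intro i n
    rw [← heq i n]
    simp only [hAdef, hedef, Matrix.add_mulVec, Matrix.smul_mulVec,
      Matrix.mulVec_sub, Matrix.mulVec_smul]
    abel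
  have h2 : ∀ i n, e i (n + 1) - e i n = (Δt / 2) • (v i n + v i (n + 1)) := by
    intro i n
    simp only [hedef, hupd i n]
    module
  -- energy decay
  have h3 : ∀ n, Q (n + 1) ≤ Q n := by
    intro n
    have key : ∀ i, v i (n+1) ⬝ᵥ (A i).mulVec (v i (n+1)) - v i n ⬝ᵥ (A i).mulVec (v i n)
        = (lam (n+1) - lam n) ⬝ᵥ (C i).mulVec (v i (n+1) + v i n)
          - (2 / Δt) * ((e i (n+1) - e i n) ⬝ᵥ (K i).mulVec (e i (n+1) - e i n)) := by
      intro i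
      set w := v i (n+1) + v i n with hw
      set δ := e i (n+1) - e i n with hδ
      have hdiff : (A i).mulVec (v i (n+1)) - (A i).mulVec (v i n)
          + ((K i).mulVec (e i (n+1)) - (K i).mulVec (e i n))
          = (C i)ᵀ.mulVec (lam (n+1)) - (C i)ᵀ.mulVec (lam n) := by
        rw [sub_add_sub_comm, h1 i (n+1), h1 i n]
      have hdot := congrArg (fun z => w ⬝ᵥ z) hdiff
      simp only [dotProduct_sub, dotProduct_add] at hdot
      -- w ⬝ᵥ A v⁺ - w ⬝ᵥ A v = v⁺ A v⁺ - v A v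
      have hAv : w ⬝ᵥ (A i).mulVec (v i (n+1)) - w ⬝ᵥ (A i).mulVec (v i n)
          = v i (n+1) ⬝ᵥ (A i).mulVec (v i (n+1)) - v i n ⬝ᵥ (A i).mulVec (v i n) := by
        simp only [hw, add_dotProduct]
        rw [dot_symm (hAsymm i) (v i n) (v i (n+1))]
        ring
      -- w ⬝ᵥ K e⁺ - w ⬝ᵥ K e = (2/Δt) δ K δ
      have hKe : w ⬝ᵥ (K i).mulVec (e i (n+1)) - w ⬝ᵥ (K i).mulVec (e i n)
          = (2 / Δt) * (δ ⬝ᵥ (K i).mulVec δ) := by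
        have hwδ : w = (2 / Δt) • δ := by
          rw [hδ, h2 i n, smul_smul]
          have hc : (2 / Δt) * (Δt / 2) = 1 := by field_simp
          rw [hc, one_smul, hw]
          exact add_comm _ _
        rw [← dotProduct_sub, ← Matrix.mulVec_sub, ← hδ, hwδ, smul_dotProduct, smul_eq_mul]
      -- w ⬝ᵥ Cᵀ λ = λ ⬝ᵥ C w
      have hC : ∀ q : ℕ, w ⬝ᵥ (C i)ᵀ.mulVec (lam q) = lam q ⬝ᵥ (C i).mulVec w :=
        fun q => dot_transpose (C i) w (lam q)
      rw [hC, hC] at hdot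
      rw [← hAv, ← hKe]
      rw [hw] at hdot ⊢
      rw [sub_dotProduct]
      linarith [hdot]
    have hsum : Q (n+1) - Q n
        = (lam (n+1) - lam n) ⬝ᵥ (∑ i, (C i).mulVec (v i (n+1) + v i n))
          - ∑ i, (2 / Δt) * ((e i (n+1) - e i n) ⬝ᵥ (K i).mulVec (e i (n+1) - e i n)) := by
      rw [hQdef]
      simp only [← Finset.sum_sub_distrib]
      rw [Finset.sum_congr rfl (fun i _ => key i), Finset.sum_sub_distrib, dotProduct_finsum]
    have hzero : (∑ i, (C i).mulVec (v i (n+1) + v i n)) = 0 := by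
      simp only [Matrix.mulVec_add, Finset.sum_add_distrib, hcont, add_zero]
    rw [hzero, dotProduct_zero, zero_sub] at hsum
    have hnn : 0 ≤ ∑ i, (2 / Δt) * ((e i (n+1) - e i n) ⬝ᵥ (K i).mulVec (e i (n+1) - e i n)) :=
      Finset.sum_nonneg fun i _ =>
        mul_nonneg (by positivity) (hKpsd i _)
    linarith
  have hQmono : ∀ n, Q n ≤ Q 0 := by
    intro n
    induction n with
    | zero => exact le_refl _
    | succ k ih => exact (h3 k).trans ih
  have hterm : ∀ i n, v i n ⬝ᵥ (A i).mulVec (v i n) ≤ Q 0 := by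
    intro i n
    refine le_trans ?_ (hQmono n)
    exact Finset.single_le_sum (f := fun j => v j n ⬝ᵥ (A j).mulVec (v j n))
      (fun j _ => hApsd j _) (Finset.mem_univ i)
  -- coercivity constants
  choose μ hμpos hμ using fun i => posdef_coercive (hA i)
  set R : Fin S → ℝ := fun i => Real.sqrt (Q 0 / μ i) with hRdef
  have hvR : ∀ i n, _root_.enorm (v i n) ≤ R i := by
    intro i n
    apply Real.sqrt_le_sqrt
    rw [le_div_iff₀ (hμpos i)]
    rw [mul_comm]
    exact (hμ i (v i n)).trans (hterm i n)
  set B : ℝ := ∑ i, R i with hBdef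
  have hRB : ∀ i, R i ≤ B :=
    fun i => Finset.single_le_sum (f := R) (fun j _ => Real.sqrt_nonneg _) (Finset.mem_univ i)
  have hB0 : 0 ≤ B := Finset.sum_nonneg fun i _ => Real.sqrt_nonneg _
  refine ⟨(1 + Δt) * (1 + B), by nlinarith, fun i n => ?_⟩
  have hv1 : _root_.enorm (v i n) ≤ 1 + B := le_trans (hvR i n) (by linarith [hRB i])
  have hv2 : _root_.enorm (v i (n+1)) ≤ 1 + B := le_trans (hvR i (n+1)) (by linarith [hRB i])
  constructor
  · exact le_trans hv1 (by nlinarith)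
  · have hjump : d i (n+1) - d i n = Δt • ((1 - γ) • v i n + γ • v i (n+1)) := by
      rw [hupd i n]; abel
    rw [hjump, enorm_smul', abs_of_pos hΔt]
    have htri : _root_.enorm ((1 - γ) • v i n + γ • v i (n+1))
        ≤ (1 - γ) * _root_.enorm (v i n) + γ * _root_.enorm (v i (n+1)) := by
      refine le_trans (enorm_add_le' _ _) ?_
      rw [enorm_smul', enorm_smul', abs_of_nonneg (by linarith), abs_of_nonneg hγ₀]
    have : (1 - γ) * _root_.enorm (v i n) + γ * _root_.enorm (v i (n+1)) ≤ 1 + B := by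
      have e1 := mul_le_mul_of_nonneg_left hv1 (by linarith : (0:ℝ) ≤ 1 - γ)
      have e2 := mul_le_mul_of_nonneg_left hv2 hγ₀
      nlinarith
    nlinarith [enorm_nonneg' ((1 - γ) • v i n + γ • v i (n+1))]
end

section
/- Let M be a real symmetric positive definite n × n matrix, K a real symmetric positive semidefinite n × n matrix, and ω ≥ 0 a real number such that xᵀ·K·x ≤ ω·xᵀ·M·x for all x ∈ ℝⁿ. Let Δt > 0, γ ∈ [0,1], α > 0, and set α* := 1 + α·(γ − 1/2). If α* ≥ 0 and Δt·(1 − 2γ)·ω ≤ 2·α*, then the matrix Ã := α*·M + Δt·(γ − 1/2)·K is positive semidefinite. In particular, for 1/2 ≤ γ ≤ 1 the matrix Ã is positive semidefinite for every Δt > 0 and every α > 0. -/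
open Matrix

lemma quad_expand {n : ℕ} (M K : Matrix (Fin n) (Fin n) ℝ) (a b : ℝ) (x : Fin n → ℝ) :
    x ⬝ᵥ ((a • M + b • K) *ᵥ x) = a * (x ⬝ᵥ M *ᵥ x) + b * (x ⬝ᵥ K *ᵥ x) := by
  simp [add_mulVec, smul_mulVec, dotProduct_add, dotProduct_smul, smul_eq_mul]

lemma psd_of_quad {n : ℕ} (M K : Matrix (Fin n) (Fin n) ℝ)
    (hM : M.IsHermitian) (hK : K.IsHermitian) (a b : ℝ)
    (h : ∀ x : Fin n → ℝ, 0 ≤ a * (x ⬝ᵥ M *ᵥ x) + b * (x ⬝ᵥ K *ᵥ x)) :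
    (a • M + b • K).PosSemidef := by
  refine PosSemidef.of_dotProduct_mulVec_nonneg (by show _ᴴ = _; rw [conjTranspose_add, conjTranspose_smul, conjTranspose_smul, hM.eq, hK.eq, star_trivial, star_trivial]) fun x => ?_
  rw [show star x = x from rfl, quad_expand]
  exact h x

/-- If `M` is symmetric positive definite, `K` symmetric positive semidefinite, `ω ≥ 0`
satisfies `xᵀKx ≤ ω·xᵀMx` for all `x`, `Δt > 0`, `γ ∈ [0,1]`, `α > 0`, and with
`α* = 1 + α·(γ - 1/2)` we have `α* ≥ 0` and `Δt·(1-2γ)·ω ≤ 2·α*`, then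
`Ã = α*·M + Δt·(γ - 1/2)·K` is positive semidefinite.  In particular, for
`1/2 ≤ γ ≤ 1` it is positive semidefinite for every `Δt > 0` and every `α > 0`. -/
theorem Atilde_posSemidef {n : ℕ} (M K : Matrix (Fin n) (Fin n) ℝ)
    (hM : M.PosDef) (hK : K.PosSemidef)
    (ω : ℝ) (hω : 0 ≤ ω)
    (hgen : ∀ x : Fin n → ℝ, x ⬝ᵥ K.mulVec x ≤ ω * (x ⬝ᵥ M.mulVec x))
    (Δt γ α : ℝ) (hΔt : 0 < Δt) (hγ₀ : 0 ≤ γ) (hγ₁ : γ ≤ 1) (hα : 0 < α)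
    (hαstar : 0 ≤ 1 + α * (γ - 1/2))
    (hcond : Δt * (1 - 2 * γ) * ω ≤ 2 * (1 + α * (γ - 1/2))) :
    ((1 + α * (γ - 1/2)) • M + (Δt * (γ - 1/2)) • K).PosSemidef ∧
      (1/2 ≤ γ → ∀ Δt' α' : ℝ, 0 < Δt' → 0 < α' →
        ((1 + α' * (γ - 1/2)) • M + (Δt' * (γ - 1/2)) • K).PosSemidef) := by
  have hMx : ∀ x : Fin n → ℝ, 0 ≤ x ⬝ᵥ M *ᵥ x := fun x => by
    simpa using hM.posSemidef.dotProduct_mulVec_nonneg x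
  have hKx : ∀ x : Fin n → ℝ, 0 ≤ x ⬝ᵥ K *ᵥ x := fun x => by
    simpa using hK.dotProduct_mulVec_nonneg x
  constructor
  · refine psd_of_quad M K hM.1 hK.1 _ _ fun x => ?_
    rcases le_or_gt 0 (Δt * (γ - 1/2)) with hb | hb
    · have := mul_nonneg hαstar (hMx x); have := mul_nonneg hb (hKx x); linarith
    · -- b < 0; use xᵀKx ≤ ω xᵀMx
      have h1 : Δt * (γ - 1/2) * (x ⬝ᵥ K *ᵥ x) ≥ Δt * (γ - 1/2) * (ω * (x ⬝ᵥ M *ᵥ x)) :=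
        mul_le_mul_of_nonpos_left (hgen x) hb.le
      have h2 : 0 ≤ (1 + α * (γ - 1/2)) + Δt * (γ - 1/2) * ω := by nlinarith
      nlinarith [hMx x, mul_nonneg h2 (hMx x)]
  · intro hγ Δt' α' hΔt' hα'
    refine psd_of_quad M K hM.1 hK.1 _ _ fun x => ?_
    have hMx' := hMx x; have hKx' := hKx x
    have h1 : 0 ≤ 1 + α' * (γ - 1/2) := by nlinarith
    have h2 : 0 ≤ Δt' * (γ - 1/2) := by nlinarith
    positivity
end

section
/- Under the Baumgarte stabilized domain decomposition method with parameter α > 0, if for each i the matrix Ã_i := α*·M_i + Δt·(γ − 1/2)·K_i is positive semidefinite, where α* := 1 + α·(γ − 1/2), then the energy ∑_{i=1}^S v_i(n)ᵀ·(α·M_i + Δt·K_i)·v_i(n) is non-increasing in n: for all n ∈ ℕ, ∑_{i=1}^S v_i(n+1)ᵀ·(α·M_i + Δt·K_i)·v_i(n+1) ≤ ∑_{i=1}^S v_i(n)ᵀ·(α·M_i + Δt·K_i)·v_i(n). -/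
open Matrix

lemma symm_dot_s14 {k : ℕ} (A : Matrix (Fin k) (Fin k) ℝ) (hA : Aᵀ = A)
    (x y : Fin k → ℝ) : x ⬝ᵥ A.mulVec y = y ⬝ᵥ A.mulVec x := by
  conv_lhs => rw [dotProduct_mulVec, ← hA, vecMul_transpose]
  rw [dotProduct_comm]

lemma sum_dot {ι κ : Type*} [Fintype κ] (s : Finset ι) (f : ι → κ → ℝ) (y : κ → ℝ) :
    (∑ i ∈ s, f i) ⬝ᵥ y = ∑ i ∈ s, f i ⬝ᵥ y := by
  simp only [dotProduct, Finset.sum_apply, Finset.sum_mul]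
  exact Finset.sum_comm

lemma key_ident {k : ℕ} (M K : Matrix (Fin k) (Fin k) ℝ) (hMs : Mᵀ = M) (hKs : Kᵀ = K)
    (Δt γ α : ℝ) (p q : Fin k → ℝ) :
    (Δt • (q - p) + α • (Δt • ((1 - γ) • p + γ • q))) ⬝ᵥ
        (M.mulVec (q - p) + K.mulVec (Δt • ((1 - γ) • p + γ • q)))
      = Δt * ((q - p) ⬝ᵥ ((1 + α * (γ - 1/2)) • M + (Δt * (γ - 1/2)) • K).mulVec (q - p))
        + α * ((Δt • ((1 - γ) • p + γ • q)) ⬝ᵥ K.mulVec (Δt • ((1 - γ) • p + γ • q)))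
        + (α * Δt / 2) * (q ⬝ᵥ M.mulVec q - p ⬝ᵥ M.mulVec p)
        + (Δt ^ 2 / 2) * (q ⬝ᵥ K.mulVec q - p ⬝ᵥ K.mulVec p) := by
  simp only [mulVec_add, mulVec_smul, mulVec_sub, add_mulVec, smul_mulVec,
    dotProduct_add, add_dotProduct, dotProduct_smul, smul_dotProduct, dotProduct_sub,
    sub_dotProduct, smul_eq_mul]
  rw [symm_dot_s14 M hMs p q, symm_dot_s14 K hKs p q]
  ring


/-- Under the Baumgarte stabilized domain decomposition method with parameter `α > 0`,
if each `Ãᵢ = α*·Mᵢ + Δt·(γ - 1/2)·Kᵢ` (with `α* = 1 + α·(γ - 1/2)`) is positive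
semidefinite, then the energy `∑ᵢ vᵢ(n)ᵀ·(α·Mᵢ + Δt·Kᵢ)·vᵢ(n)` is non-increasing. -/
theorem baumgarte_energy_nonincreasing
    (S m : ℕ) (hS : 1 ≤ S) (nn : Fin S → ℕ)
    (M K : ∀ i : Fin S, Matrix (Fin (nn i)) (Fin (nn i)) ℝ)
    (hM : ∀ i, (M i).PosDef) (hK : ∀ i, (K i).PosSemidef)
    (C : ∀ i : Fin S, Matrix (Fin m) (Fin (nn i)) ℝ)
    (Δt γ α : ℝ) (hΔt : 0 < Δt) (hγ₀ : 0 ≤ γ) (hγ₁ : γ ≤ 1) (hα : 0 < α)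
    (hAt : ∀ i, ((1 + α * (γ - 1/2)) • M i + (Δt * (γ - 1/2)) • K i).PosSemidef)
    (d v : ∀ i : Fin S, ℕ → (Fin (nn i) → ℝ)) (lam : ℕ → (Fin m → ℝ))
    (heq : ∀ i n, (M i).mulVec (v i n) + (K i).mulVec (d i n) = (C i)ᵀ.mulVec (lam n))
    (hupd : ∀ i n, d i (n + 1) = d i n + Δt • ((1 - γ) • v i n + γ • v i (n + 1)))
    (hcont : ∀ n, ∑ i : Fin S, (C i).mulVec (v i n) +
      (α / Δt) • ∑ i : Fin S, (C i).mulVec (d i n) = 0) :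
    ∀ n : ℕ,
      ∑ i : Fin S, v i (n + 1) ⬝ᵥ (α • M i + Δt • K i).mulVec (v i (n + 1)) ≤
        ∑ i : Fin S, v i n ⬝ᵥ (α • M i + Δt • K i).mulVec (v i n) := by
  intro n
  have hMs : ∀ i, (M i)ᵀ = M i := fun i => by
    have := (hM i).1; simpa [Matrix.IsHermitian, conjTranspose_eq_transpose_of_trivial] using this
  have hKs : ∀ i, (K i)ᵀ = K i := fun i => by
    have := (hK i).1; simpa [Matrix.IsHermitian, conjTranspose_eq_transpose_of_trivial] using this
  set δ : ∀ i : Fin S, Fin (nn i) → ℝ := fun i => v i (n+1) - v i n with hδ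
  set D : ∀ i : Fin S, Fin (nn i) → ℝ :=
    fun i => Δt • ((1 - γ) • v i n + γ • v i (n+1)) with hDdef
  have hD : ∀ i, d i (n+1) - d i n = D i := by
    intro i; rw [hupd i n]; abel
  -- difference of subdomain equations
  have hdiff : ∀ i, (M i).mulVec (δ i) + (K i).mulVec (D i)
      = (C i)ᵀ.mulVec (lam (n+1) - lam n) := by
    intro i
    rw [← hD i]
    simp only [hδ, mulVec_sub]
    rw [← heq i (n+1), ← heq i n]
    abel
  -- the test vector satisfies the summed constraint
  have hW : ∀ k, ∑ i : Fin S, (C i).mulVec (v i k)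
      = -((α / Δt) • ∑ i : Fin S, (C i).mulVec (d i k)) :=
    fun k => eq_neg_of_add_eq_zero_left (hcont k)
  have hsum0 : ∑ i : Fin S, (C i).mulVec (Δt • δ i + α • D i) = 0 := by
    have : ∀ i : Fin S, (C i).mulVec (Δt • δ i + α • D i)
        = Δt • ((C i).mulVec (v i (n+1)) - (C i).mulVec (v i n))
          + α • ((C i).mulVec (d i (n+1)) - (C i).mulVec (d i n)) := by
      intro i
      rw [← hD i]
      simp [hδ, mulVec_add, mulVec_smul, mulVec_sub]
    rw [Finset.sum_congr rfl fun i _ => this i]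
    rw [Finset.sum_add_distrib, ← Finset.smul_sum, ← Finset.smul_sum,
      Finset.sum_sub_distrib, Finset.sum_sub_distrib, hW (n+1), hW n]
    have hne : Δt ≠ 0 := ne_of_gt hΔt
    match_scalars <;> field_simp <;> ring
  -- the energy balance: the test vector kills the Lagrange multiplier
  have hz : ∑ i : Fin S,
      (Δt • δ i + α • D i) ⬝ᵥ ((M i).mulVec (δ i) + (K i).mulVec (D i)) = 0 := by
    have : ∀ i : Fin S,
        (Δt • δ i + α • D i) ⬝ᵥ ((M i).mulVec (δ i) + (K i).mulVec (D i))
          = (C i).mulVec (Δt • δ i + α • D i) ⬝ᵥ (lam (n+1) - lam n) := by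
      intro i
      rw [hdiff i, dotProduct_mulVec, vecMul_transpose]
    rw [Finset.sum_congr rfl fun i _ => this i, ← sum_dot, hsum0, zero_dotProduct]
  -- rewrite each summand via the key identity
  have hz' : ∑ i : Fin S,
      (Δt * (δ i ⬝ᵥ ((1 + α * (γ - 1/2)) • M i + (Δt * (γ - 1/2)) • K i).mulVec (δ i))
        + α * (D i ⬝ᵥ (K i).mulVec (D i))
        + (α * Δt / 2) * (v i (n+1) ⬝ᵥ (M i).mulVec (v i (n+1)) - v i n ⬝ᵥ (M i).mulVec (v i n))
        + (Δt ^ 2 / 2) * (v i (n+1) ⬝ᵥ (K i).mulVec (v i (n+1)) - v i n ⬝ᵥ (K i).mulVec (v i n)))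
      = 0 := by
    rw [← hz]
    exact Finset.sum_congr rfl fun i _ =>
      (key_ident (M i) (K i) (hMs i) (hKs i) Δt γ α (v i n) (v i (n+1))).symm
  -- nonnegativity of the dissipation terms
  have hQ : 0 ≤ ∑ i : Fin S,
      δ i ⬝ᵥ ((1 + α * (γ - 1/2)) • M i + (Δt * (γ - 1/2)) • K i).mulVec (δ i) :=
    Finset.sum_nonneg fun i _ => by simpa using (hAt i).dotProduct_mulVec_nonneg (δ i)
  have hR : 0 ≤ ∑ i : Fin S, D i ⬝ᵥ (K i).mulVec (D i) :=
    Finset.sum_nonneg fun i _ => by simpa using (hK i).dotProduct_mulVec_nonneg (D i)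
  -- assemble
  simp only [Finset.sum_add_distrib, ← Finset.mul_sum, Finset.sum_sub_distrib] at hz'
  simp only [add_mulVec, smul_mulVec, dotProduct_add, dotProduct_smul, smul_eq_mul,
    Finset.sum_add_distrib, ← Finset.mul_sum]
  nlinarith [hz', hQ, hR, mul_pos hα hΔt, sq_nonneg Δt, mul_nonneg hΔt.le hQ,
    mul_nonneg hα.le hR]
end
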